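/- For any graph G of order n ≥ k ≥ 3, the generalized k-connectivities of G and its complement satisfy 1 ≤ κ_k(G) + κ_k(Ḡ) ≤ n − ⌈k/2⌉. -/

import Mathlib

open SimpleGraph

variable {V : Type*}

/-- An `S`-Steiner tree in `G`: a subgraph of `G` that is a tree and contains all of `S`. -/
def IsSteinerTree (G : SimpleGraph V) (S : Set V) (T : G.Subgraph) : Prop :=
  S ⊆ T.verts ∧ T.coe.IsTree

/-- The maximum number of pairwise edge-disjoint `S`-Steiner trees in `G`. -/
noncomputable def steinerEdgeConn (G : SimpleGraph V) (S : Set V) : ℕ :=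
  sSup {n : ℕ | ∃ f : Fin n → G.Subgraph, (∀ i, IsSteinerTree G S (f i)) ∧
    ∀ i j, i ≠ j → Disjoint (f i).edgeSet (f j).edgeSet}

/-- The maximum number of pairwise internally disjoint `S`-Steiner trees in `G`. -/
noncomputable def steinerConn (G : SimpleGraph V) (S : Set V) : ℕ :=
  sSup {n : ℕ | ∃ f : Fin n → G.Subgraph, (∀ i, IsSteinerTree G S (f i)) ∧
    ∀ i j, i ≠ j → Disjoint (f i).edgeSet (f j).edgeSet ∧
      (f i).verts ∩ (f j).verts = S}

/-- The generalized `k`-edge-connectivity `λ_k(G)`. -/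
noncomputable def genEdgeConn (G : SimpleGraph V) (k : ℕ) : ℕ :=
  sInf {m : ℕ | ∃ S : Set V, S.ncard = k ∧ steinerEdgeConn G S = m}

/-- The generalized `k`-connectivity `κ_k(G)`. -/
noncomputable def genConn (G : SimpleGraph V) (k : ℕ) : ℕ :=
  sInf {m : ℕ | ∃ S : Set V, S.ncard = k ∧ steinerConn G S = m}

/-- The edge-connectivity `λ(G)`: the least size of a set of edges whose removal
disconnects the graph. -/
noncomputable def edgeConn (G : SimpleGraph V) : ℕ :=
  sInf {m : ℕ | ∃ M : Set (Sym2 V), M ⊆ G.edgeSet ∧ M.ncard = m ∧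
    ¬ (G.deleteEdges M).Connected}

/-- The vertex-connectivity `κ(G)`: the least size of a set of vertices whose removal
leaves a non-connected graph. -/
noncomputable def vertConn (G : SimpleGraph V) : ℕ :=
  sInf {m : ℕ | ∃ A : Set V, A.ncard = m ∧ ¬ (G.induce (Aᶜ : Set V)).Connected}


/-- The minimum degree `δ(G)` (as the least cardinality of a neighbor set). -/
noncomputable def minDeg (G : SimpleGraph V) : ℕ :=
  sInf {d : ℕ | ∃ v : V, (G.neighborSet v).ncard = d}

section ForestBound

private lemma isAcyclic_mono' {W : Type*} {F H : SimpleGraph W} (hle : F ≤ H)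
    (hH : H.IsAcyclic) : F.IsAcyclic := fun _ c hc => hH (c.mapLe hle) (hc.mapLe hle)

private lemma forest_bound {W : Type*} [Fintype W] :
    ∀ (n : ℕ) (F : SimpleGraph W), F.IsAcyclic → F.edgeSet.ncard = n →
      ∀ U : Finset W, U.Nonempty → (∀ e ∈ F.edgeSet, ∀ x ∈ e, x ∈ U) → n < U.card := by
  intro n
  induction n using Nat.strong_induction_on with
  | _ n ih =>
    intro F hF hcard U hU hend
    rcases Nat.eq_zero_or_pos n with rfl | hn
    · simpa using hU.card_pos
    · classical
      have hne : F.edgeSet.Nonempty := by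
        rw [← Set.ncard_pos (Set.toFinite _)] at *
        omega
      obtain ⟨e, he⟩ := hne
      induction e using Sym2.ind with
      | _ x y =>
      have hadj : F.Adj x y := he
      have hxy : x ≠ y := hadj.ne
      set F' := F \ fromEdgeSet {s(x, y)} with hF'def
      have hbridge : ¬ F'.Reachable x y := by
        have h1 := (isAcyclic_iff_forall_adj_isBridge.mp hF) hadj
        rw [isBridge_iff] at h1
        exact h1
      have hF'edge : F'.edgeSet = F.edgeSet \ {s(x, y)} := by
        rw [hF'def, edgeSet_sdiff, edgeSet_fromEdgeSet]
        ext e'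
        simp only [Set.mem_diff, Set.mem_singleton_iff, Set.mem_setOf_eq, not_and, not_not]
        constructor
        · rintro ⟨h1, h2⟩
          refine ⟨h1, fun h3 => ?_⟩
          exact (F.not_isDiag_of_mem_edgeSet h1) (h2 h3)
        · rintro ⟨h1, h2⟩
          exact ⟨h1, fun h3 => absurd h3 h2⟩
      have hF'le : F' ≤ F := sdiff_le
      have hF'sub : F'.edgeSet ⊆ F.edgeSet := by rw [hF'edge]; exact Set.diff_subset
      set U1 : Finset W := U.filter (fun z => F'.Reachable z x) with hU1def
      set U2 : Finset W := U \ U1 with hU2def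
      have hU1sub : U1 ⊆ U := Finset.filter_subset _ _
      have hxU : x ∈ U1 := by
        rw [hU1def, Finset.mem_filter]
        exact ⟨hend _ he x (by simp), Reachable.refl x⟩
      have hyU : y ∈ U2 := by
        rw [hU2def, Finset.mem_sdiff, hU1def, Finset.mem_filter]
        exact ⟨hend _ he y (by simp), fun h => hbridge h.2.symm⟩
      set E1 : Set (Sym2 W) := {e' ∈ F'.edgeSet | ∀ z ∈ e', z ∈ U1} with hE1def
      set E2 : Set (Sym2 W) := F'.edgeSet \ E1 with hE2def
      have hE1sub : E1 ⊆ F'.edgeSet := Set.sep_subset _ _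
      have hE1mem : ∀ e' ∈ E1, ∀ z ∈ e', z ∈ U1 := fun e' h => h.2
      have hE2mem : ∀ e' ∈ E2, ∀ z ∈ e', z ∈ U2 := by
        intro e' he' z hz
        revert he' hz
        induction e' using Sym2.ind with
        | _ a b =>
          intro he' hz
          obtain ⟨h1, h2⟩ := he'
          have hab : F'.Adj a b := h1
          have haU : a ∈ U := hend _ (hF'sub h1) a (by simp)
          have hbU : b ∈ U := hend _ (hF'sub h1) b (by simp)
          have hnr : ¬ F'.Reachable a x := by
            intro hr
            apply h2
            refine ⟨h1, ?_⟩
            intro z hz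
            rcases Sym2.mem_iff.mp hz with rfl | rfl
            · rw [hU1def, Finset.mem_filter]; exact ⟨haU, hr⟩
            · rw [hU1def, Finset.mem_filter]; exact ⟨hbU, hab.symm.reachable.trans hr⟩
          have hnrb : ¬ F'.Reachable b x := fun hr => hnr (hab.reachable.trans hr)
          rcases Sym2.mem_iff.mp hz with rfl | rfl
          · rw [hU2def, Finset.mem_sdiff, hU1def, Finset.mem_filter]
            exact ⟨haU, fun h => hnr h.2⟩
          · rw [hU2def, Finset.mem_sdiff, hU1def, Finset.mem_filter]
            exact ⟨hbU, fun h => hnrb h.2⟩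
      have hndiag : ∀ e' ∈ F'.edgeSet, ¬ e'.IsDiag :=
        fun e' h => F.not_isDiag_of_mem_edgeSet (hF'sub h)
      -- the two subgraphs
      have key : ∀ (E0 : Set (Sym2 W)), E0 ⊆ F'.edgeSet →
          (fromEdgeSet E0).edgeSet = E0 ∧ fromEdgeSet E0 ≤ F := by
        intro E0 hsub
        constructor
        · rw [edgeSet_fromEdgeSet]
          ext e'
          simp only [Set.mem_diff, Set.mem_setOf_eq, and_iff_left_iff_imp]
          exact fun h => hndiag e' (hsub h)
        · intro a b hab
          rw [fromEdgeSet_adj] at hab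
          exact hF'le (hsub hab.1)
      obtain ⟨hE1eq, hF1le⟩ := key E1 hE1sub
      obtain ⟨hE2eq, hF2le⟩ := key E2 Set.diff_subset
      have hsplit : E1.ncard + E2.ncard = n - 1 := by
        have h1 : F'.edgeSet.ncard = n - 1 := by
          rw [hF'edge, Set.ncard_diff_singleton_of_mem he, hcard]
        have h2 : E2.ncard = F'.edgeSet.ncard - E1.ncard :=
          Set.ncard_diff hE1sub (Set.toFinite _)
        have h3 : E1.ncard ≤ F'.edgeSet.ncard := Set.ncard_le_ncard hE1sub (Set.toFinite _)
        omega
      have h1lt : E1.ncard < n := by omega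
      have h2lt : E2.ncard < n := by omega
      have ihn1 := ih _ h1lt (fromEdgeSet E1) (isAcyclic_mono' hF1le hF) (by rw [hE1eq])
        U1 ⟨x, hxU⟩ (by rw [hE1eq]; exact hE1mem)
      have ihn2 := ih _ h2lt (fromEdgeSet E2) (isAcyclic_mono' hF2le hF) (by rw [hE2eq])
        U2 ⟨y, hyU⟩ (by rw [hE2eq]; exact hE2mem)
      have hcards : U2.card + U1.card = U.card := Finset.card_sdiff_add_card_eq_card hU1sub
      omega

end ForestBound
section TreeFacts

variable [Fintype V] {G : SimpleGraph V}

private lemma tree_edge_ncard (T : G.Subgraph) (ht : T.coe.IsTree) :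
    T.edgeSet.ncard + 1 = T.verts.ncard := by
  classical
  have hinj : Function.Injective (Sym2.map (Subtype.val : T.verts → V)) :=
    Sym2.map.injective Subtype.val_injective
  have himg : Sym2.map (↑) '' T.coe.edgeSet = T.edgeSet := T.image_coe_edgeSet_coe
  have h1 : T.coe.edgeSet.ncard = T.edgeSet.ncard := by
    rw [← himg, Set.ncard_image_of_injective _ hinj]
  have h2 := ht.card_edgeFinset
  rw [SimpleGraph.edgeFinset_card] at h2
  have h3 : T.coe.edgeSet.ncard = Fintype.card T.coe.edgeSet := by
    rw [← Nat.card_coe_set_eq, Nat.card_eq_fintype_card]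
  have h4 : T.verts.ncard = Fintype.card T.verts := by
    rw [← Nat.card_coe_set_eq, Nat.card_eq_fintype_card]
  omega

private lemma tree_forest (T : G.Subgraph) (ht : T.coe.IsTree) (S : Set V)
    (hne : (T.verts \ S).Nonempty) :
    {e ∈ T.edgeSet | ∀ x ∈ e, x ∉ S}.ncard < (T.verts \ S).ncard := by
  classical
  set E' : Set (Sym2 T.verts) := {e ∈ T.coe.edgeSet | ∀ x ∈ e, (x : V) ∉ S} with hE'def
  have hE'sub : E' ⊆ T.coe.edgeSet := Set.sep_subset _ _
  set F := fromEdgeSet E' with hFdef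
  have hFle : F ≤ T.coe := by
    intro a b hab
    rw [hFdef, fromEdgeSet_adj] at hab
    exact (SimpleGraph.mem_edgeSet _).mp (hE'sub hab.1)
  have hFedge : F.edgeSet = E' := by
    rw [hFdef, edgeSet_fromEdgeSet]
    ext e'
    simp only [Set.mem_diff, Set.mem_setOf_eq, and_iff_left_iff_imp]
    exact fun h => T.coe.not_isDiag_of_mem_edgeSet (hE'sub h)
  set U : Finset T.verts := Set.toFinset {w : T.verts | (w : V) ∉ S} with hUdef
  have hUne : U.Nonempty := by
    obtain ⟨v, hv⟩ := hne
    exact ⟨⟨v, hv.1⟩, by rw [hUdef, Set.mem_toFinset]; exact hv.2⟩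
  have hend : ∀ e ∈ F.edgeSet, ∀ x ∈ e, x ∈ U := by
    intro e he x hx
    rw [hFedge] at he
    rw [hUdef, Set.mem_toFinset]
    exact he.2 x hx
  have hmain := forest_bound E'.ncard F (isAcyclic_mono' hFle ht.IsAcyclic)
    (by rw [hFedge]) U hUne hend
  -- transfer cardinalities
  have hinj : Function.Injective (Sym2.map (Subtype.val : T.verts → V)) :=
    Sym2.map.injective Subtype.val_injective
  have himg2 : Sym2.map (↑) '' E' = {e ∈ T.edgeSet | ∀ x ∈ e, x ∉ S} := by
    ext e
    constructor
    · rintro ⟨e', ⟨he', hcond⟩, rfl⟩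
      refine ⟨T.image_coe_edgeSet_coe ▸ ⟨e', he', rfl⟩, ?_⟩
      intro x hx
      obtain ⟨y, hy, rfl⟩ := Sym2.mem_map.mp hx
      exact hcond y hy
    · rintro ⟨he, hcond⟩
      have : e ∈ Sym2.map (↑) '' T.coe.edgeSet := by rw [T.image_coe_edgeSet_coe]; exact he
      obtain ⟨e', he', rfl⟩ := this
      refine ⟨e', ⟨he', fun x hx => hcond _ (Sym2.mem_map.mpr ⟨x, hx, rfl⟩)⟩, rfl⟩
  have hc1 : E'.ncard = {e ∈ T.edgeSet | ∀ x ∈ e, x ∉ S}.ncard := by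
    rw [← himg2, Set.ncard_image_of_injective _ hinj]
  have himg3 : (Subtype.val : T.verts → V) '' {w : T.verts | (w : V) ∉ S} = T.verts \ S := by
    ext v
    constructor
    · rintro ⟨w, hw, rfl⟩
      exact ⟨w.2, hw⟩
    · rintro ⟨hv1, hv2⟩
      exact ⟨⟨v, hv1⟩, hv2, rfl⟩
  have hc2 : U.card = (T.verts \ S).ncard := by
    rw [← himg3, Set.ncard_image_of_injective _ Subtype.val_injective, hUdef,
      ← Set.ncard_eq_toFinset_card']
  omega

end TreeFacts
section CountMain

private lemma two_mul_choose_two (n : ℕ) : 2 * (n + 1).choose 2 = (n + 1) * n := by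
  have hdvd : 2 ∣ (n + 1) * n := by
    have h := Nat.even_mul_succ_self n
    rw [mul_comm] at h
    exact h.two_dvd
  rw [Nat.choose_two_right, Nat.add_sub_cancel, Nat.mul_div_cancel' hdvd]

open scoped Classical in
private lemma count_main {ι : Type*} [Fintype ι] [Fintype V] {k : ℕ} (S : Finset V)
    (hS : S.card = k) (h3 : 3 ≤ k)
    (Vs : ι → Finset V) (E : ι → Finset (Sym2 V))
    (hSsub : ∀ i, S ⊆ Vs i)
    (hnd : ∀ i, ∀ e ∈ E i, ¬ e.IsDiag)
    (hend : ∀ i, ∀ e ∈ E i, ∀ x ∈ e, x ∈ Vs i)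
    (hcount : ∀ i, (Vs i).card ≤ (E i).card + 1)
    (hforest : ∀ i, Vs i ≠ S →
      ((E i).filter (fun e => ∀ x ∈ e, x ∉ S)).card < ((Vs i) \ S).card)
    (hdisj : ∀ i j, i ≠ j → Disjoint (E i) (E j)) :
    Fintype.card ι ≤ (Fintype.card V - k) + k / 2 := by
  classical
  set I : Finset ι := Finset.univ.filter (fun i => Vs i = S) with hIdef
  set O : Finset ι := Finset.univ.filter (fun i => ¬ Vs i = S) with hOdef
  have hmr : I.card + O.card = Fintype.card ι := by
    rw [hIdef, hOdef, Finset.card_filter_add_card_filter_not, Finset.card_univ]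
  set ein : ι → Finset (Sym2 V) := fun i => (E i).filter (fun e => ∀ x ∈ e, x ∈ S) with heindef
  set ecr : ι → Finset (Sym2 V) := fun i => (E i).filter
    (fun e => ¬ (∀ x ∈ e, x ∈ S) ∧ ¬ (∀ x ∈ e, x ∉ S)) with hecrdef
  set eout : ι → Finset (Sym2 V) := fun i => (E i).filter (fun e => ∀ x ∈ e, x ∉ S) with heoutdef
  -- partition of each E i
  have hpart : ∀ i, (E i).card = (ein i).card + (ecr i).card + (eout i).card := by
    intro i
    have h1 : (ein i).card + ((E i).filter (fun e => ¬ ∀ x ∈ e, x ∈ S)).card = (E i).card :=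
      Finset.card_filter_add_card_filter_not _
    have h2 : (((E i).filter (fun e => ¬ ∀ x ∈ e, x ∈ S)).filter (fun e => ∀ x ∈ e, x ∉ S)).card
        + (((E i).filter (fun e => ¬ ∀ x ∈ e, x ∈ S)).filter (fun e => ¬ ∀ x ∈ e, x ∉ S)).card
        = ((E i).filter (fun e => ¬ ∀ x ∈ e, x ∈ S)).card :=
      Finset.card_filter_add_card_filter_not _
    have h3 : ((E i).filter (fun e => ¬ ∀ x ∈ e, x ∈ S)).filter (fun e => ∀ x ∈ e, x ∉ S)
        = eout i := by
      rw [Finset.filter_filter, heoutdef]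
      apply Finset.filter_congr
      intro e he
      constructor
      · rintro ⟨-, h⟩; exact h
      · intro h
        refine ⟨fun hin => ?_, h⟩
        induction e using Sym2.ind with
        | _ a b => exact (h a (by simp)) (hin a (by simp))
    have h4 : ((E i).filter (fun e => ¬ ∀ x ∈ e, x ∈ S)).filter (fun e => ¬ ∀ x ∈ e, x ∉ S)
        = ecr i := by
      rw [Finset.filter_filter, hecrdef]
    rw [h3, h4] at h2
    omega
  -- inside edge budget set
  set T0 : Finset (Sym2 V) := S.sym2 \ S.image Sym2.diag with hT0def
  have hDsub : S.image Sym2.diag ⊆ S.sym2 := by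
    intro e he
    obtain ⟨a, ha, rfl⟩ := Finset.mem_image.mp he
    rw [Finset.mem_sym2_iff]
    intro x hx
    have : x = a := by
      have : (Sym2.diag a) = s(a, a) := rfl
      rw [this, Sym2.mem_iff] at hx
      tauto
    rwa [this]
  have hT0 : 2 * T0.card = k * (k - 1) := by
    obtain ⟨k', rfl⟩ : ∃ k', k = k' + 1 := ⟨k - 1, by omega⟩
    have hD : (S.image Sym2.diag).card = k' + 1 := by
      rw [Finset.card_image_of_injective _ Sym2.diag_injective, hS]
    have hsum : T0.card + (k' + 1) = S.sym2.card := by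
      rw [hT0def, ← hD]
      exact Finset.card_sdiff_add_card_eq_card hDsub
    have hsym : 2 * S.sym2.card = (k' + 2) * (k' + 1) := by
      rw [Finset.card_sym2, hS]
      exact two_mul_choose_two (k' + 1)
    have hexp : (k' + 2) * (k' + 1) = (k' + 1) * k' + 2 * (k' + 1) := by ring
    have : 2 * T0.card + 2 * (k' + 1) = (k' + 1) * k' + 2 * (k' + 1) := by
      rw [← hexp, ← hsym]
      omega
    simpa using this
  -- each ein i lands in T0
  have heinT0 : ∀ i, ein i ⊆ T0 := by
    intro i e he
    rw [heindef, Finset.mem_filter] at he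
    rw [hT0def, Finset.mem_sdiff]
    constructor
    · rw [Finset.mem_sym2_iff]; exact he.2
    · intro hmem
      obtain ⟨a, _, rfl⟩ := Finset.mem_image.mp hmem
      exact hnd i _ he.1 (Sym2.diag_isDiag a)
  -- sums of inside edges
  have hdisj_ein : ∀ i ∈ (Finset.univ : Finset ι), ∀ j ∈ Finset.univ, i ≠ j →
      Disjoint (ein i) (ein j) := by
    intro i _ j _ hij
    exact (hdisj i j hij).mono (Finset.filter_subset _ _) (Finset.filter_subset _ _)
  have hsumU : ∑ i, (ein i).card ≤ T0.card := by
    rw [← Finset.card_biUnion hdisj_ein]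
    apply Finset.card_le_card
    intro e he
    obtain ⟨i, _, hei⟩ := Finset.mem_biUnion.mp he
    exact heinT0 i hei
  have hsplitsum : ∑ i ∈ I, (ein i).card + ∑ i ∈ O, (ein i).card = ∑ i, (ein i).card := by
    rw [hIdef, hOdef]
    exact Finset.sum_filter_add_sum_filter_not _ _ _
  have hsI : (k - 1) * I.card ≤ ∑ i ∈ I, (ein i).card := by
    have : ∀ i ∈ I, k - 1 ≤ (ein i).card := by
      intro i hi
      rw [hIdef, Finset.mem_filter] at hi
      have heq : ein i = E i := by
        rw [heindef]
        apply Finset.filter_true_of_mem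
        intro e he x hx
        rw [← hi.2]
        exact hend i e he x hx
      have := hcount i
      rw [hi.2, hS] at this
      rw [heq]
      omega
    have h := Finset.card_nsmul_le_sum I _ _ this
    rwa [smul_eq_mul, mul_comm] at h
  -- outside vertices
  set U : Finset V := Finset.univ.biUnion (fun i => Vs i \ S) with hUdef
  have hUcard : U.card ≤ Fintype.card V - k := by
    have hsub : U ⊆ Sᶜ := by
      intro v hv
      obtain ⟨i, _, hvi⟩ := Finset.mem_biUnion.mp hv
      rw [Finset.mem_compl]
      exact (Finset.mem_sdiff.mp hvi).2
    calc U.card ≤ (Sᶜ : Finset V).card := Finset.card_le_card hsub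
      _ = Fintype.card V - k := by rw [Finset.card_compl, hS]
  -- cross edges budget
  set crossAll : Finset (Sym2 V) := (S ×ˢ U).image (fun p => s(p.1, p.2)) with hcrossdef
  have hcrosscard : crossAll.card ≤ k * U.card := by
    calc crossAll.card ≤ (S ×ˢ U).card := Finset.card_image_le
      _ = k * U.card := by rw [Finset.card_product, hS]
  have hcrsub : ∀ i, ecr i ⊆ crossAll := by
    intro i e he
    rw [hecrdef, Finset.mem_filter] at he
    obtain ⟨heE, hnin, hnout⟩ := he
    push_neg at hnin hnout
    obtain ⟨w, hw, hwS⟩ := hnout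
    obtain ⟨u, hu, huS⟩ := hnin
    have huU : u ∈ U := by
      rw [hUdef, Finset.mem_biUnion]
      exact ⟨i, Finset.mem_univ i, Finset.mem_sdiff.mpr ⟨hend i e heE u hu, huS⟩⟩
    rw [hcrossdef, Finset.mem_image]
    refine ⟨(w, u), Finset.mem_product.mpr ⟨hwS, huU⟩, ?_⟩
    -- e = s(w, u)
    induction e using Sym2.ind with
    | _ a b =>
      rcases Sym2.mem_iff.mp hw with rfl | rfl <;> rcases Sym2.mem_iff.mp hu with rfl | rfl
      · exact absurd hwS huS
      · rfl
      · exact Sym2.eq_swap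
      · exact absurd hwS huS
  have hdisj_ecr : ∀ i ∈ (Finset.univ : Finset ι), ∀ j ∈ Finset.univ, i ≠ j →
      Disjoint (ecr i) (ecr j) := by
    intro i _ j _ hij
    exact (hdisj i j hij).mono (Finset.filter_subset _ _) (Finset.filter_subset _ _)
  have hscross : ∑ i ∈ O, (ecr i).card ≤ k * U.card := by
    calc ∑ i ∈ O, (ecr i).card ≤ ∑ i, (ecr i).card :=
          Finset.sum_le_sum_of_subset (Finset.subset_univ O)
      _ = (Finset.univ.biUnion ecr).card := (Finset.card_biUnion hdisj_ecr).symm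
      _ ≤ crossAll.card := Finset.card_le_card (by
          intro e he
          obtain ⟨i, _, hei⟩ := Finset.mem_biUnion.mp he
          exact hcrsub i hei)
      _ ≤ k * U.card := hcrosscard
  -- per-outside-tree inequality
  have houtside : ∀ i ∈ O, k ≤ (ein i).card + (ecr i).card := by
    intro i hi
    rw [hOdef, Finset.mem_filter] at hi
    have hssub : S ⊂ Vs i := Finset.ssubset_iff_subset_ne.mpr ⟨hSsub i, fun h => hi.2 h.symm⟩
    have htpos : 1 ≤ (Vs i \ S).card := by
      obtain ⟨v, hv, hvS⟩ := Finset.exists_of_ssubset hssub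
      exact Finset.card_pos.mpr ⟨v, Finset.mem_sdiff.mpr ⟨hv, hvS⟩⟩
    have htcard : (Vs i \ S).card + k = (Vs i).card := by
      rw [← hS]; exact Finset.card_sdiff_add_card_eq_card (hSsub i)
    have hf : (eout i).card < (Vs i \ S).card := hforest i hi.2
    have hc := hcount i
    have hp := hpart i
    omega
  have hkr : k * O.card ≤ ∑ i ∈ O, (ein i).card + ∑ i ∈ O, (ecr i).card := by
    have h := Finset.card_nsmul_le_sum O (fun i => (ein i).card + (ecr i).card) k
      (fun i hi => houtside i hi)
    rw [smul_eq_mul, mul_comm] at h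
    rwa [Finset.sum_add_distrib] at h
  -- endgame arithmetic
  set m := I.card
  set r := O.card
  set u := U.card
  set sI := ∑ i ∈ I, (ein i).card
  set sO := ∑ i ∈ O, (ein i).card
  set sc := ∑ i ∈ O, (ecr i).card
  have hk1 : 0 < k - 1 := by omega
  rcases le_or_gt r u with hru | hru
  · -- few outside trees
    have h1 : 2 * ((k - 1) * m) ≤ 2 * T0.card := by omega
    rw [hT0] at h1
    have h2 : (k - 1) * (2 * m) ≤ (k - 1) * k := by
      calc (k - 1) * (2 * m) = 2 * ((k - 1) * m) := by ring
        _ ≤ k * (k - 1) := h1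
        _ = (k - 1) * k := by ring
    have h3 : 2 * m ≤ k := Nat.le_of_mul_le_mul_left h2 hk1
    omega
  · -- many outside trees
    have hso : k * (r - u) ≤ sO := by
      have heq : k * (r - u) + k * u = k * r := by
        rw [← Nat.mul_add]
        congr 1
        omega
      have := hkr
      -- k * r ≤ sO + sc ≤ sO + k * u
      have h1 : k * r ≤ sO + k * u := by
        calc k * r ≤ sO + sc := hkr
          _ ≤ sO + k * u := by omega
      omega
    have h2 : (k - 1) * (m + (r - u)) ≤ T0.card := by
      calc (k - 1) * (m + (r - u)) = (k - 1) * m + (k - 1) * (r - u) := by ring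
        _ ≤ (k - 1) * m + k * (r - u) := by
            have : (k - 1) * (r - u) ≤ k * (r - u) := Nat.mul_le_mul_right _ (by omega)
            omega
        _ ≤ sI + sO := by omega
        _ ≤ T0.card := by omega
    have h3 : (k - 1) * (2 * (m + (r - u))) ≤ (k - 1) * k := by
      calc (k - 1) * (2 * (m + (r - u))) = 2 * ((k - 1) * (m + (r - u))) := by ring
        _ ≤ 2 * T0.card := by omega
        _ = k * (k - 1) := hT0
        _ = (k - 1) * k := by ring
    have h4 : 2 * (m + (r - u)) ≤ k := Nat.le_of_mul_le_mul_left h3 hk1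
    omega

end CountMain
section Connectivity

private lemma compl_reachable_of_not_reachable {G : SimpleGraph V} {u w : V}
    (h : ¬ G.Reachable u w) : Gᶜ.Reachable u w := by
  rcases eq_or_ne u w with rfl | hne
  · exact Reachable.refl u
  · exact (SimpleGraph.Adj.reachable (by
      rw [SimpleGraph.compl_adj]
      exact ⟨hne, fun hadj => h hadj.reachable⟩))

private lemma compl_connected_of_not_connected [Nonempty V] {G : SimpleGraph V}
    (h : ¬ G.Connected) : Gᶜ.Connected := by
  have hp : ¬ G.Preconnected := fun hp => h ⟨hp⟩
  rw [SimpleGraph.Preconnected] at hp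
  push_neg at hp
  obtain ⟨a, b, hab⟩ := hp
  constructor
  intro x y
  by_cases hxy : G.Reachable x y
  · have hc : ¬ G.Reachable x a ∨ ¬ G.Reachable x b := by
      by_contra hcc
      push_neg at hcc
      exact hab (hcc.1.symm.trans hcc.2)
    obtain ⟨c, hc⟩ : ∃ c, ¬ G.Reachable x c := by
      rcases hc with hc | hc
      · exact ⟨a, hc⟩
      · exact ⟨b, hc⟩
    have hyc : ¬ G.Reachable y c := fun hr => hc (hxy.trans hr)
    exact (compl_reachable_of_not_reachable hc).trans
      (compl_reachable_of_not_reachable hyc).symm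
  · exact compl_reachable_of_not_reachable hxy

private lemma exists_isTree_le [Fintype V] :
    ∀ (n : ℕ) (G : SimpleGraph V), G.Connected → G.edgeSet.ncard = n →
      ∃ H, H ≤ G ∧ H.IsTree := by
  intro n
  induction n using Nat.strong_induction_on with
  | _ n ih =>
    intro G hG hcard
    by_cases hac : G.IsAcyclic
    · exact ⟨G, le_rfl, hG, hac⟩
    · rw [SimpleGraph.IsAcyclic] at hac
      push_neg at hac
      obtain ⟨v, c, hc⟩ := hac
      cases c with
      | nil => exact absurd hc (SimpleGraph.Walk.IsCycle.not_of_nil)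
      | @cons _ w _ hadj p =>
        have hnodup : s(v, w) ∉ p.edges := by
          have := hc.edges_nodup
          rw [SimpleGraph.Walk.edges_cons] at this
          exact (List.nodup_cons.mp this).1
        set G' := G.deleteEdges {s(v, w)} with hG'def
        have hle : G' ≤ G := SimpleGraph.deleteEdges_le _
        have hpw : ∀ e ∈ p.edges, e ∉ ({s(v, w)} : Set (Sym2 V)) := by
          intro e he
          rw [Set.mem_singleton_iff]
          rintro rfl
          exact hnodup he
        have hreach : G'.Reachable w v := (p.toDeleteEdges _ hpw).reachable
        haveI : Nonempty V := hG.nonempty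
        have hkey : ∀ {x y : V}, G.Reachable x y → G'.Reachable x y := by
          intro x y hxy
          obtain ⟨q⟩ := hxy
          induction q with
          | nil => exact Reachable.refl _
          | @cons a b c hadj' q' ihq =>
            refine Reachable.trans ?_ ihq
            by_cases he : s(a, b) = s(v, w)
            · rw [Sym2.eq_iff] at he
              rcases he with ⟨rfl, rfl⟩ | ⟨rfl, rfl⟩
              · exact hreach.symm
              · exact hreach
            · refine SimpleGraph.Adj.reachable ?_
              rw [hG'def, SimpleGraph.deleteEdges_adj]
              exact ⟨hadj', by simpa using he⟩
        have hconn : G'.Connected := ⟨fun x y => hkey (hG.preconnected x y)⟩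
        have hecard : G'.edgeSet.ncard < n := by
          have h1 : G'.edgeSet = G.edgeSet \ {s(v, w)} := by
            rw [hG'def, SimpleGraph.edgeSet_deleteEdges]
          have h2 : s(v, w) ∈ G.edgeSet := hadj
          rw [h1, Set.ncard_diff_singleton_of_mem h2, hcard]
          have : 0 < n := by
            rw [← hcard, Set.ncard_pos (Set.toFinite _)]
            exact ⟨_, h2⟩
          omega
        obtain ⟨H, hH1, hH2⟩ := ih _ hecard G' hconn rfl
        exact ⟨H, hH1.trans hle, hH2⟩

private lemma exists_steiner_tree [Fintype V] {G : SimpleGraph V} (hG : G.Connected)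
    (S : Set V) : ∃ T : G.Subgraph, IsSteinerTree G S T := by
  obtain ⟨H, hle, hH⟩ := exists_isTree_le G.edgeSet.ncard G hG rfl
  set T := SimpleGraph.toSubgraph H hle with hTdef
  have hverts : T.verts = Set.univ := rfl
  haveI : Nonempty V := hG.nonempty
  haveI : Nonempty T.verts := ⟨⟨Classical.arbitrary V, by rw [hverts]; trivial⟩⟩
  refine ⟨T, fun v _ => by rw [hverts]; trivial, ?_, ?_⟩
  · refine SimpleGraph.Connected.mk ?_
    intro a b
    obtain ⟨q⟩ := hH.isConnected.preconnected a.val b.val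
    have key : ∀ (x y : V) (_ : H.Walk x y) (hx : x ∈ T.verts) (hy : y ∈ T.verts),
        T.coe.Reachable ⟨x, hx⟩ ⟨y, hy⟩ := by
      intro x y q
      induction q with
      | nil => intro hx hy; exact Reachable.refl _
      | @cons x' z' y' hadj' q' ihq =>
        intro hx hy
        have hz : z' ∈ T.verts := by rw [hverts]; trivial
        exact Reachable.trans
          (SimpleGraph.Adj.reachable (by exact hadj' : T.coe.Adj ⟨x', hx⟩ ⟨z', hz⟩))
          (ihq hz hy)
    exact key a.val b.val q a.2 b.2
  · intro x c hc
    exact hH.IsAcyclic (c.map ⟨Subtype.val, fun hab => hab⟩)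
      (hc.map (f := ⟨Subtype.val, fun hab => hab⟩) (fun _ _ h => Subtype.ext h))

end Connectivity
section Assembly

private lemma subgraph_nd {G : SimpleGraph V} (T : G.Subgraph) :
    ∀ e ∈ T.edgeSet, ¬ e.IsDiag :=
  fun e he => G.not_isDiag_of_mem_edgeSet (T.edgeSet_subset he)

private lemma subgraph_end {G : SimpleGraph V} (T : G.Subgraph) :
    ∀ e ∈ T.edgeSet, ∀ x ∈ e, x ∈ T.verts := by
  intro e
  induction e using Sym2.ind with
  | _ a b =>
    intro he x hx
    rcases Sym2.mem_iff.mp hx with rfl | rfl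
    · exact T.edge_vert he
    · exact T.edge_vert (T.adj_symm he)

open scoped Classical in
private lemma families_bound [Fintype V] {G : SimpleGraph V} {k : ℕ} (S : Set V)
    (hS : S.ncard = k) (h3 : 3 ≤ k) {a b : ℕ}
    (f : Fin a → G.Subgraph) (hf : ∀ i, IsSteinerTree G S (f i))
    (hfd : ∀ i j, i ≠ j → Disjoint (f i).edgeSet (f j).edgeSet)
    (g : Fin b → Gᶜ.Subgraph) (hg : ∀ i, IsSteinerTree Gᶜ S (g i))
    (hgd : ∀ i j, i ≠ j → Disjoint (g i).edgeSet (g j).edgeSet) :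
    a + b ≤ (Fintype.card V - k) + k / 2 := by
  classical
  have hcompl : Disjoint G.edgeSet Gᶜ.edgeSet := by
    rw [Set.disjoint_left]
    intro e
    induction e using Sym2.ind with
    | _ x y =>
      intro h1 h2
      rw [SimpleGraph.mem_edgeSet] at h1 h2
      exact ((SimpleGraph.compl_adj G x y).mp h2).2 h1
  set Sf : Finset V := S.toFinset with hSfdef
  have hSfcard : Sf.card = k := by rw [hSfdef, ← Set.ncard_eq_toFinset_card', hS]
  -- vertex/edge data of a subgraph, uniformly
  set vertsOf : ∀ (i : Fin a ⊕ Fin b), Set V :=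
    Sum.elim (fun i => (f i).verts) (fun j => (g j).verts) with hvertsdef
  set edgesOf : ∀ (i : Fin a ⊕ Fin b), Set (Sym2 V) :=
    Sum.elim (fun i => (f i).edgeSet) (fun j => (g j).edgeSet) with hedgesdef
  have hSsub' : ∀ i, S ⊆ vertsOf i := by
    rintro (i | j)
    · exact (hf i).1
    · exact (hg j).1
  have hnd' : ∀ i, ∀ e ∈ edgesOf i, ¬ e.IsDiag := by
    rintro (i | j) e he
    · exact subgraph_nd _ e he
    · exact subgraph_nd _ e he
  have hend' : ∀ i, ∀ e ∈ edgesOf i, ∀ x ∈ e, x ∈ vertsOf i := by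
    rintro (i | j)
    · exact subgraph_end _
    · exact subgraph_end _
  have hcount' : ∀ i, (edgesOf i).ncard + 1 = (vertsOf i).ncard := by
    rintro (i | j)
    · exact tree_edge_ncard _ (hf i).2
    · exact tree_edge_ncard _ (hg j).2
  have hforest' : ∀ i, ((vertsOf i) \ S).Nonempty →
      {e ∈ edgesOf i | ∀ x ∈ e, x ∉ S}.ncard < ((vertsOf i) \ S).ncard := by
    rintro (i | j) hne
    · exact tree_forest _ (hf i).2 S hne
    · exact tree_forest _ (hg j).2 S hne
  have hdisj' : ∀ i j, i ≠ j → Disjoint (edgesOf i) (edgesOf j) := by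
    rintro (i | i) (j | j) hij
    · exact hfd i j (fun h => hij (by rw [h]))
    · exact Disjoint.mono ((f i).edgeSet_subset) ((g j).edgeSet_subset) hcompl
    · exact (Disjoint.mono ((f j).edgeSet_subset) ((g i).edgeSet_subset) hcompl).symm
    · exact hgd i j (fun h => hij (by rw [h]))
  -- now convert to finsets and invoke count_main
  have hmain := count_main (ι := Fin a ⊕ Fin b) Sf hSfcard h3
    (fun i => (vertsOf i).toFinset) (fun i => (edgesOf i).toFinset)
    (fun i => by
      intro x hx
      rw [Set.mem_toFinset]
      exact hSsub' i (by rwa [hSfdef, Set.mem_toFinset] at hx))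
    (fun i e he => hnd' i e (Set.mem_toFinset.mp he))
    (fun i e he x hx => Set.mem_toFinset.mpr (hend' i e (Set.mem_toFinset.mp he) x hx))
    (fun i => by
      rw [← Set.ncard_eq_toFinset_card', ← Set.ncard_eq_toFinset_card']
      have := hcount' i
      omega)
    (fun i hne => by
      have h1 : (vertsOf i).toFinset \ Sf = ((vertsOf i) \ S).toFinset := by
        ext v
        simp [hSfdef]
      have h2 : ((vertsOf i).toFinset \ Sf).Nonempty := by
        rw [Finset.nonempty_iff_ne_empty]
        intro h
        apply hne
        apply Finset.Subset.antisymm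
        · intro x hx
          rw [hSfdef, Set.mem_toFinset]
          by_contra hxS
          have : x ∈ (vertsOf i).toFinset \ Sf := Finset.mem_sdiff.mpr
            ⟨hx, by rwa [hSfdef, Set.mem_toFinset]⟩
          rw [h] at this
          exact absurd this (Finset.notMem_empty x)
        · intro x hx
          rw [Set.mem_toFinset]
          exact hSsub' i (by rwa [hSfdef, Set.mem_toFinset] at hx)
      have h3' : ((vertsOf i) \ S).Nonempty := by
        obtain ⟨v, hv⟩ := h2
        rw [h1, Set.mem_toFinset] at hv
        exact ⟨v, hv⟩
      have h4 := hforest' i h3'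
      have h5 : ((vertsOf i).toFinset.filter (fun e => True)) = (vertsOf i).toFinset := by simp
      have h6 : ((edgesOf i).toFinset.filter (fun e => ∀ x ∈ e, x ∉ S))
          = ({e ∈ edgesOf i | ∀ x ∈ e, x ∉ S} : Set (Sym2 V)).toFinset := by
        ext e
        simp [Finset.mem_filter, Set.mem_toFinset]
      have h7 : ((edgesOf i).toFinset.filter (fun e => ∀ x ∈ e, x ∉ Sf))
          = ((edgesOf i).toFinset.filter (fun e => ∀ x ∈ e, x ∉ S)) := by
        apply Finset.filter_congr
        intro e _
        constructor
        · intro h x hx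
          have := h x hx
          rwa [hSfdef, Set.mem_toFinset] at this
        · intro h x hx
          rw [hSfdef, Set.mem_toFinset]
          exact h x hx
      rw [h7, h6, h1, ← Set.ncard_eq_toFinset_card', ← Set.ncard_eq_toFinset_card']
      exact h4)
    (fun i j hij => Set.disjoint_toFinset.mpr (hdisj' i j hij))
  rwa [Fintype.card_sum, Fintype.card_fin, Fintype.card_fin] at hmain

private lemma steinerConn_bddAbove [Fintype V] (G : SimpleGraph V) {k : ℕ} (S : Set V)
    (hS : S.ncard = k) (h3 : 3 ≤ k) :
    BddAbove {n : ℕ | ∃ f : Fin n → G.Subgraph, (∀ i, IsSteinerTree G S (f i)) ∧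
      ∀ i j, i ≠ j → Disjoint (f i).edgeSet (f j).edgeSet ∧
        (f i).verts ∩ (f j).verts = S} := by
  refine ⟨(Fintype.card V - k) + k / 2, ?_⟩
  rintro x ⟨f, hf, hd⟩
  have := families_bound S hS h3 f hf (fun i j hij => (hd i j hij).1)
    (Fin.elim0 : Fin 0 → Gᶜ.Subgraph) (fun i => i.elim0) (fun i => i.elim0)
  omega

private lemma steinerConn_zero_mem {G : SimpleGraph V} (S : Set V) :
    0 ∈ {n : ℕ | ∃ f : Fin n → G.Subgraph, (∀ i, IsSteinerTree G S (f i)) ∧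
      ∀ i j, i ≠ j → Disjoint (f i).edgeSet (f j).edgeSet ∧
        (f i).verts ∩ (f j).verts = S} :=
  ⟨Fin.elim0, fun i => i.elim0, fun i => i.elim0⟩

private lemma steinerConn_pos [Fintype V] {G : SimpleGraph V} (hG : G.Connected) {k : ℕ}
    (S : Set V) (hS : S.ncard = k) (h3 : 3 ≤ k) : 1 ≤ steinerConn G S := by
  obtain ⟨T, hT⟩ := exists_steiner_tree hG S
  have h1 : 1 ∈ {n : ℕ | ∃ f : Fin n → G.Subgraph, (∀ i, IsSteinerTree G S (f i)) ∧
      ∀ i j, i ≠ j → Disjoint (f i).edgeSet (f j).edgeSet ∧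
        (f i).verts ∩ (f j).verts = S} := by
    refine ⟨fun _ => T, fun _ => hT, fun i j hij => absurd (Subsingleton.elim i j) hij⟩
  exact le_csSup (steinerConn_bddAbove G S hS h3) h1

private lemma steiner_sum_bound [Fintype V] (G : SimpleGraph V) {k : ℕ} (S : Set V)
    (hS : S.ncard = k) (h3 : 3 ≤ k) :
    steinerConn G S + steinerConn Gᶜ S ≤ (Fintype.card V - k) + k / 2 := by
  have hA := Nat.sSup_mem ⟨0, steinerConn_zero_mem (G := G) S⟩ (steinerConn_bddAbove G S hS h3)
  have hB := Nat.sSup_mem ⟨0, steinerConn_zero_mem (G := Gᶜ) S⟩ (steinerConn_bddAbove Gᶜ S hS h3)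
  obtain ⟨f, hf, hfd⟩ := hA
  obtain ⟨g, hg, hgd⟩ := hB
  exact families_bound S hS h3 f hf (fun i j hij => (hfd i j hij).1)
    g hg (fun i j hij => (hgd i j hij).1)

end Assembly

theorem nordhausGaddum_sum {V : Type*} [Fintype V] (G : SimpleGraph V) (n k : ℕ)
    (hn : Fintype.card V = n) (h3 : 3 ≤ k) (hkn : k ≤ n) :
    1 ≤ genConn G k + genConn Gᶜ k ∧ genConn G k + genConn Gᶜ k ≤ n - (k + 1) / 2 := by
  classical
  haveI : Nonempty V := by
    rw [← Fintype.card_pos_iff]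
    omega
  obtain ⟨F, -, hF⟩ := Finset.exists_subset_card_eq
    (show k ≤ (Finset.univ : Finset V).card by rw [Finset.card_univ]; omega)
  set S₀ : Set V := (F : Set V) with hS₀def
  have hS₀ : S₀.ncard = k := by rw [hS₀def, Set.ncard_coe_finset, hF]
  constructor
  · -- lower bound
    by_contra hcon
    push_neg at hcon
    have hzero : genConn G k = 0 ∧ genConn Gᶜ k = 0 := by omega
    have hmem1 : genConn G k ∈ {m : ℕ | ∃ S : Set V, S.ncard = k ∧ steinerConn G S = m} :=
      Nat.sInf_mem ⟨steinerConn G S₀, S₀, hS₀, rfl⟩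
    have hmem2 : genConn Gᶜ k ∈ {m : ℕ | ∃ S : Set V, S.ncard = k ∧ steinerConn Gᶜ S = m} :=
      Nat.sInf_mem ⟨steinerConn Gᶜ S₀, S₀, hS₀, rfl⟩
    obtain ⟨S₁, hS₁, hv1⟩ := hmem1
    obtain ⟨S₂, hS₂, hv2⟩ := hmem2
    by_cases hc : G.Connected
    · have := steinerConn_pos hc S₁ hS₁ h3
      omega
    · have hcc : Gᶜ.Connected := compl_connected_of_not_connected hc
      have := steinerConn_pos hcc S₂ hS₂ h3
      omega
  · -- upper bound
    have h1 : genConn G k ≤ steinerConn G S₀ := Nat.sInf_le ⟨S₀, hS₀, rfl⟩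
    have h2 : genConn Gᶜ k ≤ steinerConn Gᶜ S₀ := Nat.sInf_le ⟨S₀, hS₀, rfl⟩
    have h3' := steiner_sum_bound G S₀ hS₀ h3
    omega
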